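/- arXiv:1707.08722 — 2 statements merged into one kernel-verified Lean document; each statement's English description precedes it below -/
import Mathlib

section
/- Let A be a real 3×4 matrix of rank 3 and let f ∈ ℝ⁴ be a nonzero vector with A f = 0. Then the set of symmetric real 4×4 matrices M satisfying A M Aᵀ = 0 is exactly the set { f wᵀ + w fᵀ : w ∈ ℝ⁴ }, which is a four-dimensional linear subspace of the ten-dimensional space of symmetric 4×4 matrices. -/
open Matrix

theorem aux_ker (A : Matrix (Fin 3) (Fin 4) ℝ) (hrA : A.rank = 3)
    (f : Fin 4 → ℝ) (hf : f ≠ 0) (hAf : A.mulVec f = 0) :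
    ∀ v : Fin 4 → ℝ, A.mulVec v = 0 → ∃ c : ℝ, v = c • f := by
  have hrn := LinearMap.finrank_range_add_finrank_ker A.mulVecLin
  rw [show Module.finrank ℝ (LinearMap.range A.mulVecLin) = A.rank from rfl] at hrn
  have hker : Module.finrank ℝ (LinearMap.ker A.mulVecLin) = 1 := by
    have : Module.finrank ℝ (Fin 4 → ℝ) = 4 := by simp
    omega
  have hle : (Submodule.span ℝ {f}) ≤ LinearMap.ker A.mulVecLin := by
    rw [Submodule.span_singleton_le_iff_mem]
    simpa [Matrix.mulVecLin_apply] using hAf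
  have heq : Submodule.span ℝ {f} = LinearMap.ker A.mulVecLin := by
    apply Submodule.eq_of_le_of_finrank_eq hle
    rw [hker, finrank_span_singleton hf]
  intro v hv
  have : v ∈ Submodule.span ℝ {f} := by
    rw [heq]; simpa [Matrix.mulVecLin_apply] using hv
  rcases Submodule.mem_span_singleton.mp this with ⟨c, hc⟩
  exact ⟨c, hc.symm⟩

theorem aux_set (A : Matrix (Fin 3) (Fin 4) ℝ) (hrA : A.rank = 3)
    (f : Fin 4 → ℝ) (hf : f ≠ 0) (hAf : A.mulVec f = 0) :
    {M : Matrix (Fin 4) (Fin 4) ℝ | M.IsSymm ∧ A * M * Aᵀ = 0}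
      = {M | ∃ w : Fin 4 → ℝ, M = vecMulVec f w + vecMulVec w f} := by
  have hker := aux_ker A hrA f hf hAf
  have hs : f ⬝ᵥ f ≠ 0 := by
    intro h; exact hf ((dotProduct_self_eq_zero).mp h)
  set s := f ⬝ᵥ f with hsdef
  ext M
  simp only [Set.mem_setOf_eq]
  constructor
  · rintro ⟨hsymm, h0⟩
    have hsym : ∀ k l, M k l = M l k := fun k l => Matrix.IsSymm.apply hsymm l k
    have h1 : ∀ j : Fin 3, ∃ c : ℝ, M.mulVec (fun k => A j k) = c • f := by
      intro j
      apply hker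
      ext i2
      have expand : (A * M * Aᵀ) i2 j = ∑ k, A i2 k * ∑ l, M k l * A j l := by
        simp only [Matrix.mul_apply, Matrix.transpose_apply, Finset.sum_mul,
          Finset.mul_sum]
        rw [Finset.sum_comm]
        exact Finset.sum_congr rfl fun l _ => Finset.sum_congr rfl fun k _ => by ring
      simp only [Matrix.mulVec, dotProduct, Pi.zero_apply]
      rw [← expand, h0]
      simp
    choose c hc using h1
    have h2 : A * M = vecMulVec c f := by
      ext j i
      have := congrFun (hc j) i
      simp only [Matrix.mulVec, dotProduct, Pi.smul_apply, smul_eq_mul] at this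
      simp only [Matrix.mul_apply, vecMulVec_apply]
      rw [← this]
      exact Finset.sum_congr rfl fun l _ => by rw [hsym l i]; ring
    have h3 : ∀ x : Fin 4 → ℝ, A.mulVec (M.mulVec x) = (f ⬝ᵥ x) • c := by
      intro x
      ext j
      have h := congrFun (congrArg (fun N => N.mulVec x) h2) j
      simp only [Matrix.mulVec_mulVec] at h ⊢
      rw [h]
      simp only [Matrix.mulVec, vecMulVec_apply, dotProduct, Pi.smul_apply,
        smul_eq_mul, Finset.sum_mul]
      exact Finset.sum_congr rfl fun l _ => by ring
    have h4 : A.mulVec (M.mulVec f) = s • c := h3 f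
    have h5 : ∀ i : Fin 4, ∃ d : ℝ,
        M.mulVec (Pi.single i 1) - (f i / s) • M.mulVec f = d • f := by
      intro i
      apply hker
      rw [Matrix.mulVec_sub, Matrix.mulVec_smul, h4, h3]
      rw [dotProduct_single, mul_one, smul_smul, div_mul_cancel₀ _ hs, sub_self]
    choose d hd using h5
    refine ⟨(1/2 : ℝ) • (s⁻¹ • M.mulVec f + d), ?_⟩
    have hM : ∀ k i, M k i = s⁻¹ * M.mulVec f k * f i + f k * d i := by
      intro k i
      have h := congrFun (hd i) k
      simp only [Pi.sub_apply, Pi.smul_apply, smul_eq_mul,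
        Matrix.mulVec_single, mul_one, MulOpposite.op_one, one_smul, Matrix.col_apply] at h
      field_simp at h ⊢
      linarith [h]
    ext k i
    simp only [Matrix.add_apply, vecMulVec_apply, Pi.smul_apply, Pi.add_apply,
      smul_eq_mul]
    have e1 := hM k i
    have e2 := hM i k
    rw [hsym i k] at e2
    linear_combination e1/2 + e2/2
  · rintro ⟨w, rfl⟩
    constructor
    · unfold Matrix.IsSymm
      ext i j
      simp [vecMulVec_apply, Matrix.transpose_apply, mul_comm, add_comm]
    · have hX : A * vecMulVec f w = 0 := by
        ext j i
        have h : (A.mulVec f) j = 0 := by rw [hAf]; rfl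
        simp only [Matrix.mul_apply, vecMulVec_apply, Matrix.zero_apply]
        simp only [Matrix.mulVec, dotProduct] at h
        calc ∑ l, A j l * (f l * w i) = (∑ l, A j l * f l) * w i := by
              rw [Finset.sum_mul]; exact Finset.sum_congr rfl fun l _ => by ring
          _ = 0 := by rw [h]; ring
      have hY : vecMulVec w f * Aᵀ = 0 := by
        ext k j
        have h : (A.mulVec f) j = 0 := by rw [hAf]; rfl
        simp only [Matrix.mul_apply, vecMulVec_apply, Matrix.zero_apply,
          Matrix.transpose_apply]
        simp only [Matrix.mulVec, dotProduct] at h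
        calc ∑ l, w k * f l * A j l = w k * (∑ l, A j l * f l) := by
              rw [Finset.mul_sum]; exact Finset.sum_congr rfl fun l _ => by ring
          _ = 0 := by rw [h]; ring
      rw [Matrix.mul_add, Matrix.add_mul, hX, Matrix.zero_mul,
        Matrix.mul_assoc, hY, Matrix.mul_zero, add_zero]

theorem aux_rank (f : Fin 4 → ℝ) (hf : f ≠ 0) :
    Module.rank ℝ
      (Submodule.span ℝ
        {M : Matrix (Fin 4) (Fin 4) ℝ | ∃ w : Fin 4 → ℝ,
          M = vecMulVec f w + vecMulVec w f}) = 4 := by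
  have hs : f ⬝ᵥ f ≠ 0 := fun h => hf (dotProduct_self_eq_zero.mp h)
  let L : (Fin 4 → ℝ) →ₗ[ℝ] Matrix (Fin 4) (Fin 4) ℝ :=
    { toFun := fun w => vecMulVec f w + vecMulVec w f
      map_add' := by
        intro x y; ext i j
        simp [vecMulVec_apply]; ring
      map_smul' := by
        intro c x; ext i j
        simp [vecMulVec_apply]; ring }
  have hset : {M : Matrix (Fin 4) (Fin 4) ℝ | ∃ w : Fin 4 → ℝ,
      M = vecMulVec f w + vecMulVec w f} = Set.range L := by
    ext M; constructor
    · rintro ⟨w, rfl⟩; exact ⟨w, rfl⟩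
    · rintro ⟨w, rfl⟩; exact ⟨w, rfl⟩
  rw [hset, ← LinearMap.coe_range, Submodule.span_eq]
  have hinj : Function.Injective L := by
    rw [← LinearMap.ker_eq_bot]
    rw [Submodule.eq_bot_iff]
    intro w hw
    have h : vecMulVec f w + vecMulVec w f = 0 := hw
    have h1 : ∀ k, f k * (w ⬝ᵥ f) + w k * (f ⬝ᵥ f) = 0 := by
      intro k
      have := congrFun (congrArg (fun N => N.mulVec f) h) k
      simp only [Matrix.mulVec, vecMulVec_apply, dotProduct, Matrix.add_apply,
        Pi.add_apply, Matrix.zero_apply, Pi.zero_apply, Matrix.zero_mulVec,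
        zero_mul, Finset.sum_const_zero] at this
      simp only [dotProduct]
      rw [← this, Finset.mul_sum, Finset.mul_sum, ← Finset.sum_add_distrib]
      exact Finset.sum_congr rfl fun l _ => by ring
    have h2 : (f ⬝ᵥ f) * (w ⬝ᵥ f) + (w ⬝ᵥ f) * (f ⬝ᵥ f) = 0 := by
      have := Finset.sum_congr rfl (fun k (_ : k ∈ Finset.univ) =>
        congrArg (fun t => f k * t) (h1 k))
      simp only [Finset.mul_sum, mul_zero, Finset.sum_const_zero] at this
      rw [← this]
      simp only [dotProduct, Finset.sum_mul, Finset.mul_sum, mul_add,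
        Finset.sum_add_distrib]
      congr 1
      · rw [Finset.sum_comm]
        exact Finset.sum_congr rfl fun a _ => Finset.sum_congr rfl fun b _ => by ring
      · rw [Finset.sum_comm]
        exact Finset.sum_congr rfl fun a _ => Finset.sum_congr rfl fun b _ => by ring
    have hwf : w ⬝ᵥ f = 0 := by
      rcases mul_eq_zero.mp (by linarith [h2] : (f ⬝ᵥ f) * (w ⬝ᵥ f) = 0) with h' | h'
      · exact absurd h' hs
      · exact h'
    ext k
    have := h1 k
    rw [hwf] at this
    simp only [mul_zero, zero_add] at this
    have := mul_eq_zero.mp this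
    rcases this with h' | h'
    · exact h'
    · exact absurd h' hs
  have : Module.rank ℝ (LinearMap.range L) = Module.rank ℝ (Fin 4 → ℝ) :=
    (LinearEquiv.ofInjective L hinj).rank_eq.symm
  rw [this, rank_fun']
  simp

theorem stmt_6 (A : Matrix (Fin 3) (Fin 4) ℝ) (hrA : A.rank = 3)
    (f : Fin 4 → ℝ) (hf : f ≠ 0) (hAf : A.mulVec f = 0) :
    {M : Matrix (Fin 4) (Fin 4) ℝ | M.IsSymm ∧ A * M * Aᵀ = 0}
      = {M | ∃ w : Fin 4 → ℝ, M = vecMulVec f w + vecMulVec w f} ∧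
    Module.rank ℝ
      (Submodule.span ℝ
        {M : Matrix (Fin 4) (Fin 4) ℝ | ∃ w : Fin 4 → ℝ,
          M = vecMulVec f w + vecMulVec w f}) = 4 := by
  exact ⟨aux_set A hrA f hf hAf, aux_rank f hf⟩
end

section
/- Let A₁, A₂ be real 3×4 matrices of rank 3 with nonzero focal points f₁, f₂ ∈ ℝ⁴ (A₁ f₁ = 0, A₂ f₂ = 0). Let X ∈ ℝ⁴ be such that f₁, f₂, X are linearly independent. If X′ ∈ ℝ⁴ satisfies A₁ X′ ∈ ℝ·(A₁ X) and A₂ X′ ∈ ℝ·(A₂ X), then X′ ∈ ℝ·X. In particular, the labeled two-view triangulation of a world point not on the baseline is unique up to scale. -/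
open Matrix

lemma ker_eq_span_aux (A : Matrix (Fin 3) (Fin 4) ℝ) (hr : A.rank = 3)
    (f : Fin 4 → ℝ) (hf : f ≠ 0) (hAf : A.mulVec f = 0) :
    LinearMap.ker A.mulVecLin = Submodule.span ℝ {f} := by
  have hker : Module.finrank ℝ (LinearMap.ker A.mulVecLin) = 1 := by
    have h := LinearMap.finrank_range_add_finrank_ker A.mulVecLin
    have h4 : Module.finrank ℝ (Fin 4 → ℝ) = 4 := by simp
    rw [h4] at h
    have hr' : Module.finrank ℝ (LinearMap.range A.mulVecLin) = 3 := hr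
    omega
  symm
  apply Submodule.eq_of_le_of_finrank_eq
  · rw [Submodule.span_le, Set.singleton_subset_iff]
    simpa [LinearMap.mem_ker] using hAf
  · rw [hker, finrank_span_singleton hf]

theorem stmt_11 (A₁ A₂ : Matrix (Fin 3) (Fin 4) ℝ)
    (hrA₁ : A₁.rank = 3) (hrA₂ : A₂.rank = 3)
    (f₁ f₂ : Fin 4 → ℝ) (hf₁ : f₁ ≠ 0) (hf₂ : f₂ ≠ 0)
    (hA₁f₁ : A₁.mulVec f₁ = 0) (hA₂f₂ : A₂.mulVec f₂ = 0)
    (X : Fin 4 → ℝ) (hind : LinearIndependent ℝ ![f₁, f₂, X]) :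
    ∀ X' : Fin 4 → ℝ,
      (∃ c : ℝ, A₁.mulVec X' = c • A₁.mulVec X) →
      (∃ c : ℝ, A₂.mulVec X' = c • A₂.mulVec X) →
      ∃ c : ℝ, X' = c • X := by
  rintro X' ⟨c₁, h₁⟩ ⟨c₂, h₂⟩
  have mem₁ : X' - c₁ • X ∈ Submodule.span ℝ {f₁} := by
    rw [← ker_eq_span_aux A₁ hrA₁ f₁ hf₁ hA₁f₁]
    simp only [LinearMap.mem_ker, map_sub, _root_.map_smul, mulVecLin_apply]
    rw [h₁]; simp
  have mem₂ : X' - c₂ • X ∈ Submodule.span ℝ {f₂} := by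
    rw [← ker_eq_span_aux A₂ hrA₂ f₂ hf₂ hA₂f₂]
    simp only [LinearMap.mem_ker, map_sub, _root_.map_smul, mulVecLin_apply]
    rw [h₂]; simp
  obtain ⟨a, ha⟩ := Submodule.mem_span_singleton.mp mem₁
  obtain ⟨b, hb⟩ := Submodule.mem_span_singleton.mp mem₂
  have hsum : a • f₁ + (-b) • f₂ + (c₁ - c₂) • X = 0 := by
    have := congrArg₂ (· - ·) ha hb
    linear_combination (norm := module) this
  have hzero := Fintype.linearIndependent_iff.mp hind ![a, -b, c₁ - c₂] (by
    simpa [Fin.sum_univ_three] using hsum)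
  have ha0 : a = 0 := by simpa using hzero 0
  refine ⟨c₁, ?_⟩
  have : X' - c₁ • X = 0 := by rw [← ha, ha0]; simp
  exact sub_eq_zero.mp this
end
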